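/- Every finite nilpotent group N of nilpotency class c satisfies k(N) ≥ c·|N|^(1/c) − c + 1, where k(N) is the number of conjugacy classes of N (Sherman's bound). -/
import Mathlib

open Subgroup

/-- Key counting lemma: `|Z(G)| + k(G/Z) ≤ k(G) + 1`. -/
lemma key_count (G : Type*) [Group G] [Finite G] :
    Nat.card (center G) + Nat.card (ConjClasses (G ⧸ center G)) ≤
      Nat.card (ConjClasses G) + 1 := by
  classical
  set f : ConjClasses G → ConjClasses (G ⧸ center G) :=
    ConjClasses.map (QuotientGroup.mk' (center G)) with hf
  have hfs : Function.Surjective f :=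
    ConjClasses.map_surjective (QuotientGroup.mk'_surjective (center G))
  set s : ConjClasses (G ⧸ center G) → ConjClasses G := Function.surjInv hfs with hs
  have hsf : ∀ x, f (s x) = x := Function.surjInv_eq hfs
  set F : ((center G) ⊕ {x : ConjClasses (G ⧸ center G) // x ≠ 1}) → ConjClasses G :=
    fun y => Sum.elim (fun g : center G => ConjClasses.mk (g : G)) (fun x => s x.1) y with hF
  have hcent : ∀ g : center G, f (ConjClasses.mk (g : G)) = 1 := by
    intro g
    show ConjClasses.mk ((QuotientGroup.mk' (center G)) (g : G)) = 1
    rw [ConjClasses.one_eq_mk_one]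
    congr 1
    simpa using (QuotientGroup.eq_one_iff (g : G)).2 g.2
  have hFinj : Function.Injective F := by
    rintro (g | x) (h | y) hxy
    · simp only [hF, Sum.elim_inl] at hxy
      have hconj : IsConj (g : G) (h : G) := ConjClasses.mk_eq_mk_iff_isConj.1 hxy
      obtain ⟨u, hu⟩ := hconj
      have hu' : (u : G) * g = (h : G) * u := hu
      have hg := Subgroup.mem_center_iff.1 g.2 (u : G)
      rw [hg] at hu'
      have : (g : G) = h := mul_right_cancel hu'
      exact congrArg Sum.inl (Subtype.ext this)
    · exfalso
      simp only [hF, Sum.elim_inl, Sum.elim_inr] at hxy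
      have h1 : f (ConjClasses.mk (g : G)) = 1 := hcent g
      rw [hxy, hsf] at h1
      exact y.2 h1
    · exfalso
      simp only [hF, Sum.elim_inl, Sum.elim_inr] at hxy
      have h1 : f (ConjClasses.mk (h : G)) = 1 := hcent h
      rw [← hxy, hsf] at h1
      exact x.2 h1
    · simp only [hF, Sum.elim_inr] at hxy
      have : x.1 = y.1 := by rw [← hsf x.1, ← hsf y.1, hxy]
      exact congrArg Sum.inr (Subtype.ext this)
  have hcard : Nat.card ((center G) ⊕ {x : ConjClasses (G ⧸ center G) // x ≠ 1}) ≤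
      Nat.card (ConjClasses G) := Nat.card_le_card_of_injective F hFinj
  rw [Nat.card_sum] at hcard
  have hsplit : Nat.card (ConjClasses (G ⧸ center G)) =
      1 + Nat.card {x : ConjClasses (G ⧸ center G) // x ≠ 1} := by
    haveI : Unique {x : ConjClasses (G ⧸ center G) // x = 1} := by
      refine ⟨⟨⟨1, rfl⟩⟩, ?_⟩
      rintro ⟨x, rfl⟩
      rfl
    calc Nat.card (ConjClasses (G ⧸ center G))
        = Nat.card ({x : ConjClasses (G ⧸ center G) // x = 1} ⊕
            {x : ConjClasses (G ⧸ center G) // ¬ x = 1}) :=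
          (Nat.card_congr (Equiv.sumCompl (· = 1))).symm
      _ = 1 + Nat.card {x : ConjClasses (G ⧸ center G) // x ≠ 1} := by
          rw [Nat.card_sum, Nat.card_unique]
  omega

/-- Sherman's bound for every class, by induction on the class. -/
lemma sherman_aux : ∀ (c : ℕ) (G : Type u) [Group G] [Finite G] [Group.IsNilpotent G],
    Group.nilpotencyClass G = c →
    (Nat.card (ConjClasses G) : ℝ) ≥
      c * (Nat.card G : ℝ) ^ ((1 : ℝ) / c) - c + 1 := by
  intro c
  induction c with
  | zero =>
    intro G _ _ _ _
    have : (1 : ℝ) ≤ (Nat.card (ConjClasses G) : ℝ) := by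
      exact_mod_cast Nat.one_le_iff_ne_zero.2 Nat.card_pos.ne'
    push_cast
    linarith
  | succ c ih =>
    intro G _ _ _ hcl
    haveI : Finite (G ⧸ center G) := Quotient.finite _
    have hq : Group.nilpotencyClass (G ⧸ center G) = c := by
      rw [nilpotencyClass_quotient_center, hcl]
      omega
    set z := Nat.card (center G) with hzdef
    set m := Nat.card (G ⧸ center G) with hmdef
    set n := Nat.card G with hndef
    have hn : n = m * z := Subgroup.card_eq_card_quotient_mul_card_subgroup (center G)
    have hz1 : 1 ≤ z := Nat.card_pos
    have hm1 : 1 ≤ m := Nat.card_pos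
    have hkey := key_count G
    have hih := ih (G ⧸ center G) hq
    have hzR : (1 : ℝ) ≤ (z : ℝ) := by exact_mod_cast hz1
    have hmR : (1 : ℝ) ≤ (m : ℝ) := by exact_mod_cast hm1
    have hkeyR : (z : ℝ) + (Nat.card (ConjClasses (G ⧸ center G)) : ℝ) ≤
        (Nat.card (ConjClasses G) : ℝ) + 1 := by exact_mod_cast hkey
    have hnR : (n : ℝ) = (m : ℝ) * (z : ℝ) := by exact_mod_cast hn
    -- AM-GM step: (c+1) * n^(1/(c+1)) ≤ z + c * m^(1/c)
    have hamgm : ((c : ℝ) + 1) * (n : ℝ) ^ ((1 : ℝ) / ((c : ℝ) + 1)) ≤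
        (z : ℝ) + (c : ℝ) * (m : ℝ) ^ ((1 : ℝ) / (c : ℝ)) := by
      rcases Nat.eq_zero_or_pos c with hc0 | hcpos
      · subst hc0
        haveI : Subsingleton (G ⧸ center G) :=
          nilpotencyClass_zero_iff_subsingleton.1 hq
        have hm : m = 1 := Nat.card_unique
        have hnz : (n : ℝ) = (z : ℝ) := by rw [hnR, hm]; norm_num
        rw [hnz]
        norm_num
      · have hcR : (0 : ℝ) < (c : ℝ) := by exact_mod_cast hcpos
        have hc1R : (0 : ℝ) < (c : ℝ) + 1 := by positivity
        have hz0 : (0 : ℝ) ≤ (z : ℝ) := by linarith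
        have hm0 : (0 : ℝ) ≤ (m : ℝ) := by linarith
        have hp₂ : (0 : ℝ) ≤ (m : ℝ) ^ ((1 : ℝ) / (c : ℝ)) := by positivity
        have hw : (1 : ℝ) / ((c : ℝ) + 1) + (c : ℝ) / ((c : ℝ) + 1) = 1 := by
          field_simp
          ring
        have hgm := Real.geom_mean_le_arith_mean2_weighted
          (by positivity) (by positivity) hz0 hp₂ hw
        have hexp : ((m : ℝ) ^ ((1 : ℝ) / (c : ℝ))) ^ ((c : ℝ) / ((c : ℝ) + 1)) =
            (m : ℝ) ^ ((1 : ℝ) / ((c : ℝ) + 1)) := by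
          rw [← Real.rpow_mul hm0]
          congr 1
          field_simp
        rw [hexp] at hgm
        have hmul : (z : ℝ) ^ ((1 : ℝ) / ((c : ℝ) + 1)) * (m : ℝ) ^ ((1 : ℝ) / ((c : ℝ) + 1)) =
            (n : ℝ) ^ ((1 : ℝ) / ((c : ℝ) + 1)) := by
          rw [hnR, mul_comm (m : ℝ) (z : ℝ), Real.mul_rpow hz0 hm0]
        rw [hmul] at hgm
        have := mul_le_mul_of_nonneg_left hgm (le_of_lt hc1R)
        calc ((c : ℝ) + 1) * (n : ℝ) ^ ((1 : ℝ) / ((c : ℝ) + 1)) ≤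
            ((c : ℝ) + 1) * ((1 : ℝ) / ((c : ℝ) + 1) * (z : ℝ) +
              (c : ℝ) / ((c : ℝ) + 1) * (m : ℝ) ^ ((1 : ℝ) / (c : ℝ))) := this
          _ = (z : ℝ) + (c : ℝ) * (m : ℝ) ^ ((1 : ℝ) / (c : ℝ)) := by
              field_simp
    -- put it together
    have hcast : ((c : ℕ) + 1 : ℕ) = ((c : ℝ) + 1) := by push_cast; ring
    push_cast
    have : (Nat.card (ConjClasses G) : ℝ) ≥
        (z : ℝ) + ((c : ℝ) * (m : ℝ) ^ ((1 : ℝ) / (c : ℝ)) - (c : ℝ) + 1) - 1 := by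
      have := hih
      linarith
    linarith

theorem stmt4 (N : Type*) [Group N] [Finite N] [Group.IsNilpotent N]
    (c : ℕ) (hc : c = Group.nilpotencyClass N) (hc1 : 1 ≤ c) :
    (Nat.card (ConjClasses N) : ℝ) ≥
      c * (Nat.card N : ℝ) ^ ((1 : ℝ) / c) - c + 1 := by
  exact sherman_aux c N hc.symm
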